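/- Let K_α ⊆ [0,1) be a finite set, τ, d ∈ ℂ with Im(τ) > 0. Then the family of entire functions { z ↦ e^{2πiαz} θ(z + τα + d | τ) : α ∈ K_α } is linearly independent over ℂ. -/
import Mathlib


open Complex
open MeasureTheory

/-- The shifted Jacobi theta function
`θ(z|τ) = -∑_{n∈ℤ} exp(iπτ(n+1/2)²) exp(2πi(n+1/2)(z+1/2))`. -/
noncomputable def shiftedJacobiTheta (z τ : ℂ) : ℂ :=
  -∑' n : ℤ, Complex.exp (Real.pi * Complex.I * τ * ((n : ℂ) + 1 / 2) ^ 2) *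
      Complex.exp (2 * Real.pi * Complex.I * ((n : ℂ) + 1 / 2) * (z + 1 / 2))

lemma shifted_eq (z τ : ℂ) :
    shiftedJacobiTheta z τ =
      -(Complex.exp (Real.pi * Complex.I * τ / 4 + Real.pi * Complex.I * (z + 1 / 2)) *
        jacobiTheta₂ (z + 1 / 2 + τ / 2) τ) := by
  rw [shiftedJacobiTheta, jacobiTheta₂, ← tsum_mul_left, neg_inj]
  refine tsum_congr fun n => ?_
  rw [jacobiTheta₂_term, ← Complex.exp_add, ← Complex.exp_add]
  congr 1
  ring

lemma shifted_add_one (z τ : ℂ) : shiftedJacobiTheta (z + 1) τ = -shiftedJacobiTheta z τ := by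
  rw [shifted_eq, shifted_eq,
    show z + 1 + 1 / 2 + τ / 2 = (z + 1 / 2 + τ / 2) + 1 by ring, jacobiTheta₂_add_left,
    show (Real.pi : ℂ) * I * τ / 4 + Real.pi * I * (z + 1 + 1 / 2)
      = (Real.pi * I * τ / 4 + Real.pi * I * (z + 1 / 2)) + Real.pi * I by ring,
    Complex.exp_add, Complex.exp_pi_mul_I]
  ring

lemma exists_jacobiTheta₂_ne_zero {τ : ℂ} (hτ : 0 < τ.im) : ∃ w : ℂ, jacobiTheta₂ w τ ≠ 0 := by
  by_contra h
  push_neg at h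
  have key : ∫ x in Set.Ioc (0:ℝ) 1, (∑' n : ℤ, jacobiTheta₂_term n (x:ℂ) τ)
      = ∑' n : ℤ, ∫ x in Set.Ioc (0:ℝ) 1, jacobiTheta₂_term n (x:ℂ) τ := by
    apply MeasureTheory.integral_tsum
    · intro n
      refine Continuous.aestronglyMeasurable ?_
      unfold jacobiTheta₂_term
      fun_prop
    · have hb : Summable (fun n : ℤ => Real.exp (-Real.pi * (τ.im * n ^ 2 - 2 * 0 * |n|))) := by
        simpa using summable_pow_mul_jacobiTheta₂_term_bound 0 hτ 0
      have hle : ∀ n : ℤ, ∫⁻ x in Set.Ioc (0:ℝ) 1, ‖jacobiTheta₂_term n (x:ℂ) τ‖₊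
          ≤ ((Real.exp (-Real.pi * (τ.im * n ^ 2 - 2 * 0 * |n|))).toNNReal : ENNReal) := by
        intro n
        have hx : ∀ x : ℝ, (‖jacobiTheta₂_term n (x:ℂ) τ‖₊ : ENNReal)
            ≤ ((Real.exp (-Real.pi * (τ.im * n ^ 2 - 2 * 0 * |n|))).toNNReal : ENNReal) := by
          intro x
          rw [ENNReal.coe_le_coe, ← NNReal.coe_le_coe, coe_nnnorm,
            Real.coe_toNNReal _ (Real.exp_nonneg _)]
          exact norm_jacobiTheta₂_term_le hτ (by simp) le_rfl n
        calc ∫⁻ x in Set.Ioc (0:ℝ) 1, ‖jacobiTheta₂_term n (x:ℂ) τ‖₊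
            ≤ ∫⁻ _ in Set.Ioc (0:ℝ) 1,
              ((Real.exp (-Real.pi * (τ.im * n ^ 2 - 2 * 0 * |n|))).toNNReal : ENNReal) :=
              lintegral_mono fun x => hx x
          _ ≤ _ := by
              rw [MeasureTheory.setLIntegral_const]
              simp [Real.volume_Ioc]
      refine ne_top_of_le_ne_top ?_ (ENNReal.tsum_le_tsum hle)
      rw [← ENNReal.coe_tsum]
      · exact ENNReal.coe_ne_top
      · exact hb.toNNReal
  have lhs0 : ∫ x in Set.Ioc (0:ℝ) 1, (∑' n : ℤ, jacobiTheta₂_term n (x:ℂ) τ) = 0 := by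
    have : ∀ x : ℝ, (∑' n : ℤ, jacobiTheta₂_term n (x:ℂ) τ) = 0 := fun x => h x
    simp [this]
  have hterm : ∀ n : ℤ, n ≠ 0 → ∫ x in Set.Ioc (0:ℝ) 1, jacobiTheta₂_term n (x:ℂ) τ = 0 := by
    intro n hn
    have heq : ∀ x : ℝ, jacobiTheta₂_term n (x:ℂ) τ
        = Complex.exp (Real.pi * I * n ^ 2 * τ) * Complex.exp ((2 * Real.pi * I * n) * x) := by
      intro x
      rw [jacobiTheta₂_term, ← Complex.exp_add]
      congr 1
      ring
    simp_rw [heq, MeasureTheory.integral_const_mul]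
    have h01 : ∫ x in Set.Ioc (0:ℝ) 1, Complex.exp ((2 * Real.pi * I * n) * x)
        = ∫ x in (0:ℝ)..1, Complex.exp ((2 * Real.pi * I * n) * x) :=
      (intervalIntegral.integral_of_le (by norm_num)).symm
    rw [h01, integral_exp_mul_complex (by
      simp [Real.pi_ne_zero, Complex.I_ne_zero, hn, Complex.ext_iff])]
    rw [show (2 * (Real.pi:ℂ) * I * n) * (1:ℝ) = (n:ℂ) * (2 * Real.pi * I) by push_cast; ring]
    rw [Complex.exp_int_mul_two_pi_mul_I]
    simp
  have h0 : (∫ x in Set.Ioc (0:ℝ) 1, jacobiTheta₂_term (0:ℤ) (x:ℂ) τ) = 1 := by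
    have heq : ∀ x : ℝ, jacobiTheta₂_term (0:ℤ) (x:ℂ) τ = 1 := by
      intro x
      simp [jacobiTheta₂_term]
    simp_rw [heq]
    rw [MeasureTheory.setIntegral_const]
    simp [Real.volume_Ioc]
  have : (0:ℂ) = 1 := by
    rw [← lhs0, key, tsum_eq_single 0 hterm, h0]
  exact one_ne_zero this.symm

/-- For a finite set `K ⊆ [0,1)` and `τ, d ∈ ℂ` with `Im τ > 0`, the family of
entire functions `z ↦ e^{2πiαz} θ(z + τα + d | τ)`, `α ∈ K`, is linearly
independent over `ℂ`. -/
theorem linearIndependent_exp_mul_shiftedJacobiTheta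
    (K : Finset ℝ) (hK : ∀ α ∈ K, 0 ≤ α ∧ α < 1)
    (τ d : ℂ) (hτ : 0 < τ.im) :
    LinearIndependent ℂ fun (α : K) (z : ℂ) =>
      Complex.exp (2 * Real.pi * Complex.I * (α : ℝ) * z) *
        shiftedJacobiTheta (z + τ * (α : ℝ) + d) τ := by
  let T : Module.End ℂ (ℂ → ℂ) :=
    { toFun := fun g z => g (z + 1), map_add' := fun _ _ => rfl, map_smul' := fun _ _ => rfl }
  have hμinj : Function.Injective
      (fun α : K => -Complex.exp (2 * Real.pi * Complex.I * ((α : ℝ) : ℂ))) := by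
    intro α β hαβ
    simp only [neg_inj] at hαβ
    obtain ⟨n, hn⟩ := Complex.exp_eq_exp_iff_exists_int.mp hαβ
    have h2πI : (2 * (Real.pi : ℂ) * Complex.I) ≠ 0 := by
      simp [Real.pi_ne_zero, Complex.I_ne_zero]
    have hc : ((α : ℝ) : ℂ) = ((β : ℝ) : ℂ) + n := by
      have : (2 * (Real.pi : ℂ) * Complex.I) * ((α : ℝ) : ℂ)
          = (2 * (Real.pi : ℂ) * Complex.I) * (((β : ℝ) : ℂ) + n) := by
        rw [show (2 * (Real.pi : ℂ) * Complex.I) * ((α : ℝ) : ℂ)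
            = 2 * Real.pi * Complex.I * ((α : ℝ) : ℂ) by ring, hn]
        ring
      exact mul_left_cancel₀ h2πI this
    have hr : (α : ℝ) = (β : ℝ) + n := by
      exact_mod_cast hc
    obtain ⟨hα0, hα1⟩ := hK α α.2
    obtain ⟨hβ0, hβ1⟩ := hK β β.2
    have hn0 : n = 0 := by
      by_contra hn0
      rcases lt_or_gt_of_ne hn0 with hlt | hgt
      · have h1 : n ≤ -1 := by omega
        have : (n : ℝ) ≤ -1 := by exact_mod_cast h1
        linarith
      · have h1 : (1:ℤ) ≤ n := by omega
        have : (1 : ℝ) ≤ (n : ℝ) := by exact_mod_cast h1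
        linarith
    apply Subtype.ext
    rw [hr, hn0]
    simp
  refine T.eigenvectors_linearIndependent'
    (fun α : K => -Complex.exp (2 * Real.pi * Complex.I * ((α : ℝ) : ℂ))) hμinj _ fun α => ?_
  constructor
  · rw [Module.End.mem_eigenspace_iff]
    funext z
    show Complex.exp (2 * Real.pi * Complex.I * ((α : ℝ) : ℂ) * (z + 1)) *
        shiftedJacobiTheta (z + 1 + τ * (α : ℝ) + d) τ = _
    rw [show z + 1 + τ * ((α : ℝ) : ℂ) + d = (z + τ * ((α : ℝ) : ℂ) + d) + 1 by ring,
      shifted_add_one,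
      show 2 * (Real.pi : ℂ) * Complex.I * ((α : ℝ) : ℂ) * (z + 1)
        = 2 * Real.pi * Complex.I * ((α : ℝ) : ℂ) * z
          + 2 * Real.pi * Complex.I * ((α : ℝ) : ℂ) by ring,
      Complex.exp_add]
    simp only [Pi.smul_apply, smul_eq_mul]
    ring
  · obtain ⟨w, hw⟩ := exists_jacobiTheta₂_ne_zero hτ
    intro h0
    set z : ℂ := w - 1 / 2 - τ / 2 - τ * ((α : ℝ) : ℂ) - d with hzdef
    have hFz : Complex.exp (2 * Real.pi * Complex.I * ((α : ℝ) : ℂ) * z) *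
        shiftedJacobiTheta (z + τ * ((α : ℝ) : ℂ) + d) τ = 0 := congrFun h0 z
    have harg : z + τ * ((α : ℝ) : ℂ) + d = w - 1 / 2 - τ / 2 := by
      rw [hzdef]; ring
    rw [harg, shifted_eq, show w - 1 / 2 - τ / 2 + 1 / 2 + τ / 2 = w by ring] at hFz
    rcases mul_eq_zero.mp hFz with h1 | h2
    · exact Complex.exp_ne_zero _ h1
    · rw [neg_eq_zero] at h2
      rcases mul_eq_zero.mp h2 with h3 | h4
      · exact Complex.exp_ne_zero _ h3
      · exact hw h4
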